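/- arXiv:2408.07112 — 2 statements merged into one kernel-verified Lean document; each statement's English description precedes it below -/
import Mathlib

section
/- Let n ≥ 3, and for i ∈ {1, ..., n+1} let v^(i) ∈ ℝ^(n+1) be the vector with i-th coordinate n/(n+1) and all other coordinates -1/(n+1). Let i ≠ j and let u, u' ∈ H_n be arbitrary. Then there exist lattice points P, Q ∈ A_n and real numbers s, t such that ‖(u + P + s·v^(i)) - (u' + Q + t·v^(j))‖ ≤ sqrt(n(n-2)/(12(n-1))); that is, the minimal distance between the family of lines L_i = u + A_n + ℝ·v^(i) and the family L_j = u' + A_n + ℝ·v^(j) is at most sqrt(n(n-2)/(12(n-1))). -/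
open Finset


/-- The hyperplane `H_n = {x ∈ ℝ^(n+1) : ∑ x_i = 0}`. -/
def hyperplaneH (n : ℕ) : Set (EuclideanSpace ℝ (Fin (n + 1))) :=
  {x | ∑ i, x i = 0}

/-- The lattice `A_n = ℤ^(n+1) ∩ H_n`. -/
def Alat (n : ℕ) : Set (EuclideanSpace ℝ (Fin (n + 1))) :=
  {x | (∀ k, ∃ m : ℤ, x k = (m : ℝ)) ∧ ∑ i, x i = 0}

/-- `v n i` is the vector with `i`-th coordinate `n/(n+1)` and remaining
coordinates `-1/(n+1)` (a shortest non-zero vector of `A*_n`). -/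
noncomputable def v (n : ℕ) (i : Fin (n + 1)) : EuclideanSpace ℝ (Fin (n + 1)) :=
  WithLp.toLp 2 (fun j => if j = i then (n : ℝ) / ((n : ℝ) + 1) else -1 / ((n : ℝ) + 1))

namespace AuxCoverLemmas

lemma sum_id' (n : ℕ) : ∑ i ∈ range n, (i:ℝ) = n*(n-1)/2 := by
  induction n with
  | zero => simp
  | succ n ih => rw [sum_range_succ, ih]; push_cast; ring

lemma sum_sq' (n : ℕ) : ∑ i ∈ range n, (i:ℝ)^2 = n*(n-1)*(2*n-1)/6 := by
  induction n with
  | zero => simp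
  | succ n ih => rw [sum_range_succ, ih]; push_cast; ring

lemma inner_lin (n : ℕ) : ∑ k ∈ range n, ((n:ℝ) - k) = n*(n+1)/2 := by
  rw [Finset.sum_sub_distrib, sum_id', Finset.sum_const, card_range, nsmul_eq_mul]; ring

lemma inner_sq (n : ℕ) : ∑ k ∈ range n, ((n:ℝ) - k)^2 = n^3 - n*(n*(n-1)) + n*(n-1)*(2*n-1)/6 := by
  have : ∀ k ∈ range n, ((n:ℝ) - k)^2 = (n:ℝ)^2 - 2*n*(k:ℝ) + (k:ℝ)^2 := by
    intro k _; ring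
  rw [Finset.sum_congr rfl this]
  rw [Finset.sum_add_distrib, Finset.sum_sub_distrib, Finset.sum_const, card_range,
    nsmul_eq_mul, ← Finset.mul_sum, sum_id', sum_sq']
  ring

lemma P1 (N : ℕ) : ∑ l ∈ range N, ∑ k ∈ range l, ((l:ℝ) - k) = N*((N:ℝ)^2-1)/6 := by
  induction N with
  | zero => simp
  | succ n ih =>
    rw [sum_range_succ, ih, inner_lin]; push_cast; ring

lemma P2 (N : ℕ) : ∑ l ∈ range N, ∑ k ∈ range l, ((l:ℝ) - k)^2 = (N:ℝ)^2*((N:ℝ)^2-1)/12 := by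
  induction N with
  | zero => simp
  | succ n ih =>
    rw [sum_range_succ, ih, inner_sq]; push_cast; ring


lemma L1 (N : ℕ) (a : ℕ → ℝ) :
    ∑ l ∈ range N, ∑ k ∈ range l, (a l - a k)
      = ∑ m ∈ range N, ((2*(m:ℝ) - N + 1) * a m) := by
  induction N with
  | zero => simp
  | succ n ih =>
    rw [sum_range_succ, ih, sum_range_succ, ← Finset.sum_add_distrib]
    have h : ∀ m ∈ range n, ((2*(m:ℝ) - n + 1) * a m + (a n - a m))
        = ((2*(m:ℝ) - (n+1:ℕ) + 1) * a m + a n) := by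
      intro m _; push_cast; ring
    rw [Finset.sum_congr rfl h, Finset.sum_add_distrib, Finset.sum_const, card_range,
      nsmul_eq_mul]
    push_cast; ring

lemma L2 (N : ℕ) (a : ℕ → ℝ) :
    ∑ l ∈ range N, ∑ k ∈ range l, (((l:ℝ) - k) * (a l - a k))
      = ∑ m ∈ range N, (((m:ℝ)*((m:ℝ)+1)/2 - ((N:ℝ)-1-m)*((N:ℝ)-m)/2) * a m) := by
  induction N with
  | zero => simp
  | succ n ih =>
    rw [sum_range_succ, ih, sum_range_succ, ← Finset.sum_add_distrib]
    have h : ∀ m ∈ range n,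
        (((m:ℝ)*((m:ℝ)+1)/2 - ((n:ℝ)-1-m)*((n:ℝ)-m)/2) * a m
          + ((n:ℝ) - m) * (a n - a m))
        = (((m:ℝ)*((m:ℝ)+1)/2 - (((n+1:ℕ):ℝ)-1-m)*(((n+1:ℕ):ℝ)-m)/2) * a m
          + ((n:ℝ) - m) * a n) := by
      intro m _; push_cast; ring
    rw [Finset.sum_congr rfl h, Finset.sum_add_distrib, ← Finset.sum_mul, inner_lin]
    push_cast; ring

lemma S3 (N : ℕ) (a : ℕ → ℝ) :
    ∑ l ∈ range N, ∑ k ∈ range l, (a l - a k)^2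
      = N * ∑ m ∈ range N, (a m)^2 - (∑ m ∈ range N, a m)^2 := by
  induction N with
  | zero => simp
  | succ n ih =>
    rw [sum_range_succ, ih]
    have h : ∀ k ∈ range n, (a n - a k)^2
        = ((a n)^2 - 2*(a n)*(a k) + (a k)^2) := by intro k _; ring
    rw [Finset.sum_congr rfl h]
    rw [Finset.sum_add_distrib, Finset.sum_sub_distrib, Finset.sum_const, card_range,
      nsmul_eq_mul, ← Finset.mul_sum]
    rw [sum_range_succ (fun m => (a m)^2), sum_range_succ a]
    push_cast; ring

lemma double_sym (N : ℕ) (g : ℕ → ℕ → ℝ) (hsym : ∀ k l, g k l = g l k)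
    (hdiag : ∀ k, g k k = 0) :
    ∑ l ∈ range N, ∑ k ∈ range N, g k l
      = 2 * ∑ l ∈ range N, ∑ k ∈ range l, g k l := by
  induction N with
  | zero => simp
  | succ n ih =>
    rw [sum_range_succ]
    have h1 : ∑ l ∈ range n, ∑ k ∈ range (n+1), g k l
        = (∑ l ∈ range n, ∑ k ∈ range n, g k l) + ∑ l ∈ range n, g n l := by
      rw [← Finset.sum_add_distrib]
      exact Finset.sum_congr rfl fun l _ => sum_range_succ (fun k => g k l) n
    rw [h1, ih, sum_range_succ (fun k => g k n), hdiag]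
    rw [sum_range_succ (fun l => ∑ k ∈ range l, g k l)]
    have h2 : ∑ l ∈ range n, g n l = ∑ k ∈ range n, g k n :=
      Finset.sum_congr rfl fun l _ => hsym n l
    rw [h2]; ring

lemma CS (N : ℕ) (a : ℕ → ℝ) :
    (∑ m ∈ range N, a m)^2 ≤ N * ∑ m ∈ range N, (a m)^2 := by
  have h := Finset.sum_mul_sq_le_sq_mul_sq (range N) a (fun _ => (1:ℝ))
  simp only [mul_one, one_pow, Finset.sum_const, card_range, nsmul_eq_mul] at h
  calc (∑ m ∈ range N, a m)^2 ≤ (∑ m ∈ range N, (a m)^2) * N := h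
    _ = N * ∑ m ∈ range N, (a m)^2 := by ring


-- the cross term vanishes identically
lemma Bzero (N : ℕ) (a : ℕ → ℝ) :
    ∑ l ∈ range N, ∑ k ∈ range l, (((N:ℝ) - 2*((l:ℝ) - k)) * (a l - a k)) = 0 := by
  have h : ∀ l ∈ range N, ∑ k ∈ range l, (((N:ℝ) - 2*((l:ℝ) - k)) * (a l - a k))
      = ∑ k ∈ range l, ((N:ℝ) * (a l - a k) - 2 * (((l:ℝ) - k) * (a l - a k))) := by
    intro l _; exact Finset.sum_congr rfl fun k _ => by ring
  have h' : ∀ l ∈ range N, ∑ k ∈ range l, (((N:ℝ) - 2*((l:ℝ) - k)) * (a l - a k))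
      = (N:ℝ) * (∑ k ∈ range l, (a l - a k))
        - 2 * (∑ k ∈ range l, (((l:ℝ) - k) * (a l - a k))) := by
    intro l hl
    rw [h l hl, Finset.sum_sub_distrib, ← Finset.mul_sum, ← Finset.mul_sum]
  rw [Finset.sum_congr rfl h', Finset.sum_sub_distrib, ← Finset.mul_sum, ← Finset.mul_sum,
    L1, L2, Finset.mul_sum, Finset.mul_sum, ← Finset.sum_sub_distrib]
  have h2 : ∀ m ∈ range N, ((N:ℝ) * ((2*(m:ℝ) - N + 1) * a m)
      - 2 * ((((m:ℝ)*((m:ℝ)+1)/2 - ((N:ℝ)-1-m)*((N:ℝ)-m)/2) * a m)) = 0) := by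
    intro m _; ring
  rw [Finset.sum_congr rfl h2, Finset.sum_const_zero]


/-- The main identity: the sum over pairs of `d - d²` equals `(N²-1)/12` minus a
nonnegative quadratic. -/
lemma hub (N : ℕ) (hN : 0 < N) (f : ℕ → ℝ) :
    ∑ l ∈ range N, ∑ k ∈ range l, ((f l - f k) - (f l - f k)^2)
      ≤ ((N:ℝ)^2 - 1)/12 := by
  have hN' : ((N:ℝ)) ≠ 0 := Nat.cast_ne_zero.mpr hN.ne'
  set a : ℕ → ℝ := fun m => f m - (m:ℝ)/N with ha
  have hterm : ∀ l ∈ range N, ∀ k ∈ range l,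
      (f l - f k) - (f l - f k)^2
        = (((l:ℝ)-k)/N - (((l:ℝ)-k)/N)^2)
          + (1/N) * (((N:ℝ) - 2*((l:ℝ)-k)) * (a l - a k))
          - (a l - a k)^2 := by
    intro l _ k _
    have hak : a l - a k = (f l - f k) - ((l:ℝ)-k)/N := by simp only [ha]; ring
    rw [hak]
    field_simp
    ring
  have hsplit : ∑ l ∈ range N, ∑ k ∈ range l, ((f l - f k) - (f l - f k)^2)
      = (∑ l ∈ range N, ∑ k ∈ range l, (((l:ℝ)-k)/N - (((l:ℝ)-k)/N)^2))
        + (1/N) * (∑ l ∈ range N, ∑ k ∈ range l, (((N:ℝ) - 2*((l:ℝ)-k)) * (a l - a k)))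
        - ∑ l ∈ range N, ∑ k ∈ range l, (a l - a k)^2 := by
    have step1 : ∑ l ∈ range N, ∑ k ∈ range l, ((f l - f k) - (f l - f k)^2)
        = ∑ l ∈ range N,
            ((∑ k ∈ range l, (((l:ℝ)-k)/N - (((l:ℝ)-k)/N)^2))
              + (1/N) * (∑ k ∈ range l, (((N:ℝ) - 2*((l:ℝ)-k)) * (a l - a k)))
              - ∑ k ∈ range l, (a l - a k)^2) := by
      refine Finset.sum_congr rfl fun l hl => ?_
      rw [Finset.sum_congr rfl (hterm l hl)]
      simp only [Finset.sum_sub_distrib, Finset.sum_add_distrib]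
      rw [← Finset.mul_sum]
    rw [step1, Finset.sum_sub_distrib, Finset.sum_add_distrib, ← Finset.mul_sum]
  rw [hsplit, Bzero, mul_zero, add_zero]
  have hT1 : ∑ l ∈ range N, ∑ k ∈ range l, (((l:ℝ)-k)/N - (((l:ℝ)-k)/N)^2)
      = ((N:ℝ)^2 - 1)/12 := by
    have e : ∀ l ∈ range N, ∀ k ∈ range l, (((l:ℝ)-k)/N - (((l:ℝ)-k)/N)^2)
        = (1/N) * ((l:ℝ)-k) - (1/(N:ℝ)^2) * (((l:ℝ)-k)^2) := by
      intro l _ k _; field_simp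
    have : ∑ l ∈ range N, ∑ k ∈ range l, (((l:ℝ)-k)/N - (((l:ℝ)-k)/N)^2)
        = (1/N) * (∑ l ∈ range N, ∑ k ∈ range l, ((l:ℝ)-k))
          - (1/(N:ℝ)^2) * (∑ l ∈ range N, ∑ k ∈ range l, ((l:ℝ)-k)^2) := by
      have step1 : ∑ l ∈ range N, ∑ k ∈ range l, (((l:ℝ)-k)/N - (((l:ℝ)-k)/N)^2)
          = ∑ l ∈ range N,
              ((1/N) * (∑ k ∈ range l, ((l:ℝ)-k))
                - (1/(N:ℝ)^2) * (∑ k ∈ range l, ((l:ℝ)-k)^2)) := by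
        refine Finset.sum_congr rfl fun l hl => ?_
        rw [Finset.sum_congr rfl (e l hl)]
        rw [Finset.sum_sub_distrib, ← Finset.mul_sum, ← Finset.mul_sum]
      rw [step1, Finset.sum_sub_distrib, ← Finset.mul_sum, ← Finset.mul_sum]
    rw [this, P1, P2]
    field_simp
    ring
  rw [hT1, S3]
  have := CS N a
  linarith


/-- Key discrete lemma: some split pattern has small cost. -/
lemma key_discrete (M : ℕ) (f : ℕ → ℝ)
    (hmono : ∀ k l, k ≤ l → l ≤ M → f k ≤ f l)
    (hspan : f M - f 0 ≤ 1) :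
    ∃ j ≤ M, ∑ l ∈ range (M+1), ∑ k ∈ range l,
        ((f l - f k) - (if k ≤ j ∧ j < l then (1:ℝ) else 0))^2
      ≤ (((M+1:ℕ):ℝ)^2 - 1)/12 := by
  set N := M + 1 with hNdef
  set w : ℕ → ℝ := fun j => if j < M then f (j+1) - f j else 1 - (f M - f 0) with hw
  set C : ℕ → ℝ := fun j => ∑ l ∈ range N, ∑ k ∈ range l,
      ((f l - f k) - (if k ≤ j ∧ j < l then (1:ℝ) else 0))^2 with hC
  have hw0 : ∀ j, 0 ≤ w j := by
    intro j
    simp only [hw]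
    split_ifs with h
    · have := hmono j (j+1) (Nat.le_succ j) h
      linarith
    · linarith
  have hwsum : ∑ j ∈ range N, w j = 1 := by
    rw [hNdef, sum_range_succ]
    have h1 : ∑ j ∈ range M, w j = ∑ j ∈ range M, (f (j+1) - f j) := by
      refine Finset.sum_congr rfl fun j hj => ?_
      simp only [hw, if_pos (mem_range.mp hj)]
    rw [h1, Finset.sum_range_sub]
    simp only [hw, lt_irrefl, if_neg (lt_irrefl M)]
    ring
  -- the weighted average of the costs
  have hwc : ∑ j ∈ range N, w j * C j
      = ∑ l ∈ range N, ∑ k ∈ range l, ((f l - f k) - (f l - f k)^2) := by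
    have swap : ∑ j ∈ range N, w j * C j
        = ∑ l ∈ range N, ∑ k ∈ range l, (∑ j ∈ range N,
            w j * ((f l - f k) - (if k ≤ j ∧ j < l then (1:ℝ) else 0))^2) := by
      simp only [hC, Finset.mul_sum]
      rw [Finset.sum_comm]
      refine Finset.sum_congr rfl fun l _ => ?_
      rw [Finset.sum_comm]
    rw [swap]
    refine Finset.sum_congr rfl fun l hl => Finset.sum_congr rfl fun k hk => ?_
    have hkl : k < l := mem_range.mp hk
    have hlN : l < N := mem_range.mp hl
    have hlM : l ≤ M := Nat.lt_succ_iff.mp hlN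
    -- pointwise: (d - χ)² = d² + (1-2d)·χ
    have hpt : ∀ j, w j * ((f l - f k) - (if k ≤ j ∧ j < l then (1:ℝ) else 0))^2
        = w j * (f l - f k)^2
          + (1 - 2*(f l - f k)) * (if k ≤ j ∧ j < l then w j else 0) := by
      intro j
      by_cases h : k ≤ j ∧ j < l
      · rw [if_pos h, if_pos h]; ring
      · rw [if_neg h, if_neg h]; ring
    rw [Finset.sum_congr rfl fun j _ => hpt j, Finset.sum_add_distrib,
      ← Finset.sum_mul, hwsum, ← Finset.mul_sum]
    have hind : ∑ j ∈ range N, (if k ≤ j ∧ j < l then w j else 0)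
        = f l - f k := by
      rw [← Finset.sum_filter]
      have : filter (fun j => k ≤ j ∧ j < l) (range N) = Ico k l := by
        ext j; simp only [mem_filter, mem_range, mem_Ico]; omega
      rw [this]
      have : ∀ j ∈ Ico k l, w j = f (j+1) - f j := by
        intro j hj
        have := (mem_Ico.mp hj).2
        simp only [hw]
        rw [if_pos (by omega)]
      rw [Finset.sum_congr rfl this, Finset.sum_Ico_eq_sub _ hkl.le,
        Finset.sum_range_sub, Finset.sum_range_sub]
      ring
    rw [hind]
    ring
  -- conclusion by the averaging argument
  by_contra hcon
  push_neg at hcon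
  have hcon' : ∀ j ∈ range N, (((N:ℕ):ℝ)^2 - 1)/12 < C j := by
    intro j hj
    exact hcon j (Nat.lt_succ_iff.mp (mem_range.mp hj))
  obtain ⟨j₀, hj₀mem, hj₀pos⟩ : ∃ j ∈ range N, (0:ℝ) < w j := by
    apply Finset.exists_lt_of_sum_lt
    rw [hwsum]; simp
  have hlt : ∑ j ∈ range N, w j * ((((N:ℕ):ℝ)^2 - 1)/12)
      < ∑ j ∈ range N, w j * C j := by
    apply Finset.sum_lt_sum
    · intro j hj
      exact mul_le_mul_of_nonneg_left (hcon' j hj).le (hw0 j)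
    · exact ⟨j₀, hj₀mem, (mul_lt_mul_iff_right₀ hj₀pos).mpr (hcon' j₀ hj₀mem)⟩
  rw [← Finset.sum_mul, hwsum, one_mul] at hlt
  have hle := hub N (Nat.succ_pos M) f
  have heq : ∑ l ∈ range N, ∑ k ∈ range l, ((f l - f k) - (f l - f k)^2)
      = ∑ l ∈ range N, ∑ k ∈ range l, ((f l - f k) - (f l - f k)^2) := rfl
  rw [hwc] at hlt
  linarith



lemma keyE (N : ℕ) (hN : 1 ≤ N) (y : Fin N → ℝ) :
    ∃ c : Fin N → ℤ, ∑ k : Fin N, ∑ l : Fin N, ((y k + c k) - (y l + c l))^2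
      ≤ ((N:ℝ)^2 - 1)/6 := by
  obtain ⟨M, rfl⟩ : ∃ M, N = M + 1 := ⟨N - 1, by omega⟩
  set y' : Fin (M+1) → ℝ := fun k => Int.fract (y k) with hy'
  set σ : Equiv.Perm (Fin (M+1)) := Tuple.sort y' with hσ
  have hg : Monotone (y' ∘ σ) := Tuple.monotone_sort y'
  set f : ℕ → ℝ := fun m => if h : m < M+1 then y' (σ ⟨m, h⟩) else 0 with hf
  have hmono : ∀ k l, k ≤ l → l ≤ M → f k ≤ f l := by
    intro k l hkl hlM
    have hk : k < M + 1 := by omega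
    have hl : l < M + 1 := by omega
    simp only [hf, dif_pos hk, dif_pos hl]
    exact hg (show (⟨k, hk⟩ : Fin (M+1)) ≤ ⟨l, hl⟩ from hkl)
  have hspan : f M - f 0 ≤ 1 := by
    have h1 : f M < 1 := by
      simp only [hf, dif_pos (Nat.lt_succ_self M)]; exact Int.fract_lt_one _
    have h2 : 0 ≤ f 0 := by
      simp only [hf, dif_pos (Nat.succ_pos M)]; exact Int.fract_nonneg _
    linarith
  obtain ⟨j, hjM, hcost⟩ := key_discrete M f hmono hspan
  set x : ℕ → ℝ := fun m => f m - (if j < m then 1 else 0) with hx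
  have hC : ∑ l ∈ range (M+1), ∑ k ∈ range l, (x k - x l)^2
      ≤ (((M+1:ℕ):ℝ)^2 - 1)/12 := by
    refine le_trans (le_of_eq ?_) hcost
    refine Finset.sum_congr rfl fun l _ => Finset.sum_congr rfl fun k hk => ?_
    have hkl : k < l := mem_range.mp hk
    have : x k - x l = -((f l - f k) - (if k ≤ j ∧ j < l then (1:ℝ) else 0)) := by
      simp only [hx]
      by_cases hk' : j < k
      · have hl' : j < l := by omega
        have hno : ¬(k ≤ j ∧ j < l) := fun h => absurd h.1 (by omega)
        simp only [if_pos hk', if_pos hl', if_neg hno]; ring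
      · by_cases hl' : j < l
        · have hyes : (k ≤ j ∧ j < l) := ⟨by omega, hl'⟩
          simp only [if_neg hk', if_pos hl', if_pos hyes]; ring
        · have hno : ¬(k ≤ j ∧ j < l) := fun h => absurd h.2 hl'
          simp only [if_neg hk', if_neg hl', if_neg hno]; ring
    rw [this, neg_sq]
  have hfull : ∑ l ∈ range (M+1), ∑ k ∈ range (M+1), (x k - x l)^2
      ≤ (((M+1:ℕ):ℝ)^2 - 1)/6 := by
    rw [double_sym (M+1) (fun k l => (x k - x l)^2) (fun k l => by ring)
      (fun k => by ring)]
    linarith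
  refine ⟨fun m => -⌊y m⌋ - (if j < ((σ.symm m : Fin (M+1)) : ℕ) then 1 else 0), ?_⟩
  have hval : ∀ m : Fin (M+1), y m + ((-⌊y m⌋ - (if j < ((σ.symm m : Fin (M+1)) : ℕ) then (1:ℤ) else 0)) : ℤ)
      = x ((σ.symm m : Fin (M+1)) : ℕ) := by
    intro m
    have hlt : ((σ.symm m : Fin (M+1)) : ℕ) < M + 1 := (σ.symm m).isLt
    simp only [hx, hf, dif_pos hlt]
    have : σ ⟨((σ.symm m : Fin (M+1)) : ℕ), hlt⟩ = m := by
      rw [Fin.eta]; exact σ.apply_symm_apply m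
    rw [this]
    push_cast
    split_ifs with h
    · simp only [hy']; rw [← Int.self_sub_floor]; ring
    · simp only [hy']; rw [← Int.self_sub_floor]; ring
  have hrw : ∑ k : Fin (M+1), ∑ l : Fin (M+1),
      ((y k + ((-⌊y k⌋ - (if j < ((σ.symm k : Fin (M+1)) : ℕ) then (1:ℤ) else 0)) : ℤ))
        - (y l + ((-⌊y l⌋ - (if j < ((σ.symm l : Fin (M+1)) : ℕ) then (1:ℤ) else 0)) : ℤ)))^2
      = ∑ k : Fin (M+1), ∑ l : Fin (M+1),
        (x ((σ.symm k : Fin (M+1)) : ℕ) - x ((σ.symm l : Fin (M+1)) : ℕ))^2 := by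
    refine Finset.sum_congr rfl fun k _ => Finset.sum_congr rfl fun l _ => ?_
    rw [hval k, hval l]
  rw [hrw]
  have hreidx : ∑ k : Fin (M+1), ∑ l : Fin (M+1),
      (x ((σ.symm k : Fin (M+1)) : ℕ) - x ((σ.symm l : Fin (M+1)) : ℕ))^2
      = ∑ k : Fin (M+1), ∑ l : Fin (M+1), (x (k : ℕ) - x (l : ℕ))^2 := by
    have inner : ∀ a : ℝ, ∑ l : Fin (M+1), (a - x ((σ.symm l : Fin (M+1)) : ℕ))^2
        = ∑ l : Fin (M+1), (a - x (l : ℕ))^2 := by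
      intro a
      exact Equiv.sum_comp σ.symm (fun l => (a - x (l : ℕ))^2)
    rw [show (fun k : Fin (M+1) => ∑ l : Fin (M+1),
        (x ((σ.symm k : Fin (M+1)) : ℕ) - x ((σ.symm l : Fin (M+1)) : ℕ))^2)
      = fun k : Fin (M+1) => ∑ l : Fin (M+1),
        (x ((σ.symm k : Fin (M+1)) : ℕ) - x (l : ℕ))^2 from funext fun k => inner _]
    exact Equiv.sum_comp σ.symm (fun k => ∑ l : Fin (M+1), (x (k : ℕ) - x (l : ℕ))^2)
  rw [hreidx]
  have htofin : ∑ k : Fin (M+1), ∑ l : Fin (M+1), (x (k : ℕ) - x (l : ℕ))^2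
      = ∑ l ∈ range (M+1), ∑ k ∈ range (M+1), (x k - x l)^2 := by
    rw [Finset.sum_comm]
    rw [← Fin.sum_univ_eq_sum_range (fun l => ∑ k ∈ range (M+1), (x k - x l)^2) (M+1)]
    refine Finset.sum_congr rfl fun l _ => ?_
    rw [← Fin.sum_univ_eq_sum_range (fun k => (x k - x (l:ℕ))^2) (M+1)]
  rw [htofin]
  exact hfull

end AuxCoverLemmas

open AuxCoverLemmas

/-- For `n ≥ 3`, distinct directions `i ≠ j`, and arbitrary shifts `u, u' ∈ H_n`,
some line of the family `L_i = u + A_n + ℝ·v⁽ⁱ⁾` comes within distance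
`√(n(n-2)/(12(n-1)))` of some line of the family `L_j = u' + A_n + ℝ·v⁽ʲ⁾`. -/
theorem min_dist_between_line_families_le (n : ℕ) (hn : 3 ≤ n)
    (i j : Fin (n + 1)) (hij : i ≠ j)
    (u u' : EuclideanSpace ℝ (Fin (n + 1)))
    (hu : u ∈ hyperplaneH n) (hu' : u' ∈ hyperplaneH n) :
    ∃ P ∈ Alat n, ∃ Q ∈ Alat n, ∃ s t : ℝ,
      ‖(u + P + s • v n i) - (u' + Q + t • v n j)‖ ≤
        Real.sqrt ((n : ℝ) * ((n : ℝ) - 2) / (12 * ((n : ℝ) - 1))) := by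
  classical
  have hn1R : ((n:ℝ) - 1) ≠ 0 := by
    have : (3:ℝ) ≤ (n:ℝ) := by exact_mod_cast hn
    linarith
  have hn1Rpos : (0:ℝ) < (n:ℝ) - 1 := by
    have : (3:ℝ) ≤ (n:ℝ) := by exact_mod_cast hn
    linarith
  have hnp1 : ((n:ℝ) + 1) ≠ 0 := by positivity
  set w : Fin (n+1) → ℝ := fun k => u k - u' k with hwdef
  have hwsum : ∑ k, w k = 0 := by
    simp only [hwdef, Finset.sum_sub_distrib]
    rw [hu, hu']; ring
  -- the index set S of the n-1 coordinates other than i, j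
  set S : Finset (Fin (n+1)) := (Finset.univ.erase i).erase j with hSdef
  have hjmem : j ∈ Finset.univ.erase i := Finset.mem_erase.mpr ⟨hij.symm, Finset.mem_univ j⟩
  have hcardS : S.card = n - 1 := by
    rw [hSdef, Finset.card_erase_of_mem hjmem, Finset.card_erase_of_mem (Finset.mem_univ i)]
    simp
  have hiS : i ∉ S := by
    simp only [hSdef, Finset.mem_erase]
    tauto
  have hjS : j ∉ S := by
    simp only [hSdef, Finset.mem_erase]
    tauto
  set e : {x // x ∈ S} ≃ Fin (n-1) := Finset.equivFinOfCardEq hcardS with hedef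
  -- splitting sums over all coordinates
  have husplit : ∀ F : Fin (n+1) → ℝ, ∑ k, F k = (∑ k ∈ S, F k) + F j + F i := by
    intro F
    rw [← Finset.sum_erase_add Finset.univ F (Finset.mem_univ i),
      ← Finset.sum_erase_add _ F hjmem]
  have hSsum : ∀ F : Fin (n+1) → ℝ, ∑ k ∈ S, F k = ∑ m : Fin (n-1), F (e.symm m) := by
    intro F
    rw [← Finset.sum_coe_sort S F]
    exact (Equiv.sum_comp e.symm (fun x : {x // x ∈ S} => F x)).symm
  set y : Fin (n-1) → ℝ := fun m => w (e.symm m) with hydef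
  obtain ⟨c, hc⟩ := keyE (n-1) (by omega) y
  -- the lattice point P
  set Pz : Fin (n+1) → ℤ := fun k =>
    if hk : k ∈ S then c (e ⟨k, hk⟩) else if k = i then -(∑ m, c m) else 0 with hPzdef
  set P : EuclideanSpace ℝ (Fin (n+1)) := WithLp.toLp 2 (fun k => (Pz k : ℝ)) with hPdef
  have hPzi : Pz i = -(∑ m, c m) := by simp [hPzdef, dif_neg hiS]
  have hPzj : Pz j = 0 := by simp only [hPzdef, dif_neg hjS, if_neg hij.symm]
  have hPzS : ∀ m : Fin (n-1), Pz (e.symm m) = c m := by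
    intro m
    have hmem : ((e.symm m : {x // x ∈ S}) : Fin (n+1)) ∈ S := (e.symm m).2
    simp only [hPzdef, dif_pos hmem]
    congr 1
    rw [Subtype.coe_eta]
    exact e.apply_symm_apply m
  have hPsum : ∑ k, (Pz k : ℝ) = 0 := by
    rw [husplit (fun k => (Pz k : ℝ)), hSsum (fun k => (Pz k : ℝ))]
    simp only [hPzS, hPzj, hPzi]
    push_cast
    ring
  have hPmem : P ∈ Alat n := by
    constructor
    · intro k; exact ⟨Pz k, rfl⟩
    · exact hPsum
  -- definition of x, α, s, t
  set x : Fin (n-1) → ℝ := fun m => y m + c m with hxdef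
  set α : ℝ := (∑ m, x m) / ((n:ℝ) - 1) with hαdef
  set s : ℝ := α - (w i + (Pz i : ℝ)) with hsdef
  set t : ℝ := s - ((n:ℝ) + 1) * α with htdef
  have hxsum : ∑ m, x m = ((n:ℝ) - 1) * α := by
    rw [hαdef]; field_simp
  have hα : w i + (Pz i : ℝ) + (w j + (Pz j : ℝ)) = -(((n:ℝ) - 1) * α) := by
    have h0 : ∑ k, (w k + (Pz k : ℝ)) = 0 := by
      rw [Finset.sum_add_distrib, hwsum, hPsum]; ring
    rw [husplit (fun k => w k + (Pz k : ℝ)), hSsum (fun k => w k + (Pz k : ℝ))] at h0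
    have : ∑ m : Fin (n-1), (w (e.symm m) + (Pz (e.symm m) : ℝ)) = ∑ m, x m := by
      refine Finset.sum_congr rfl fun m _ => ?_
      rw [hPzS m]
    rw [this, hxsum] at h0
    linarith
  refine ⟨P, hPmem, 0, ⟨fun k => ⟨0, by simp⟩, by simp⟩, s, t, ?_⟩
  -- compute coordinates of the difference vector
  set z : EuclideanSpace ℝ (Fin (n+1)) := (u + P + s • v n i) - (u' + 0 + t • v n j) with hzdef
  have hzcoord : ∀ k, z k = w k + (Pz k : ℝ) + s * (v n i k) - t * (v n j k) := by
    intro k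
    simp only [hzdef, hwdef, hPdef, PiLp.sub_apply, PiLp.add_apply, PiLp.smul_apply,
      PiLp.zero_apply, smul_eq_mul, PiLp.toLp_apply]
    ring
  have hvii : v n i i = (n:ℝ)/((n:ℝ)+1) := by simp [v]
  have hvij : v n i j = -1/((n:ℝ)+1) := by simp [v, hij.symm]
  have hvji : v n j i = -1/((n:ℝ)+1) := by simp [v, hij]
  have hvjj : v n j j = (n:ℝ)/((n:ℝ)+1) := by simp [v]
  have hzi : z i = 0 := by
    rw [hzcoord i, hvii, hvji, htdef, hsdef]
    field_simp
    ring
  have hzj : z j = 0 := by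
    rw [hzcoord j, hvij, hvjj, htdef, hsdef]
    field_simp
    linear_combination ((n:ℝ)+1) * hα
  have hzS : ∀ m : Fin (n-1), z (e.symm m) = x m - α := by
    intro m
    have hmem : ((e.symm m : {x // x ∈ S}) : Fin (n+1)) ∈ S := (e.symm m).2
    have hni : ((e.symm m : {x // x ∈ S}) : Fin (n+1)) ≠ i := by
      intro h; exact hiS (h ▸ hmem)
    have hnj : ((e.symm m : {x // x ∈ S}) : Fin (n+1)) ≠ j := by
      intro h; exact hjS (h ▸ hmem)
    rw [hzcoord _, hPzS m]
    have h1 : v n i (e.symm m) = -1/((n:ℝ)+1) := by simp [v, hni]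
    have h2 : v n j (e.symm m) = -1/((n:ℝ)+1) := by simp [v, hnj]
    rw [h1, h2]
    have hym : w (e.symm m) = y m := rfl
    rw [hym]
    rw [htdef]
    field_simp
    simp only [hxdef]
    ring
  -- norm computation
  have hnorm : ‖z‖ = Real.sqrt (∑ k, (z k)^2) := by
    rw [EuclideanSpace.norm_eq]
    congr 1
    exact Finset.sum_congr rfl fun k _ => by rw [Real.norm_eq_abs, sq_abs]
  have hsumz : ∑ k, (z k)^2 = ∑ m : Fin (n-1), (x m - α)^2 := by
    rw [husplit (fun k => (z k)^2), hzi, hzj, hSsum (fun k => (z k)^2)]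
    simp only [hzS]
    norm_num
  -- the quadratic bound
  have hcast : ((n - 1 : ℕ) : ℝ) = (n:ℝ) - 1 := by
    have h1 : 1 ≤ n := by omega
    push_cast [h1]
    ring
  set b : Fin (n-1) → ℝ := fun m => x m - α with hbdef
  have hbsum : ∑ m, b m = 0 := by
    simp only [hbdef]
    rw [Finset.sum_sub_distrib, hxsum, Finset.sum_const, Finset.card_univ,
      Fintype.card_fin, nsmul_eq_mul, hcast]
    ring
  have hΦ : ∑ k : Fin (n-1), ∑ l : Fin (n-1), (x k - x l)^2
      = 2*((n:ℝ)-1)*(∑ m, (b m)^2) := by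
    have inner : ∀ k : Fin (n-1), ∑ l, (x k - x l)^2
        = ((n:ℝ)-1)*(b k)^2 + ∑ m, (b m)^2 := by
      intro k
      have h1 : ∀ l : Fin (n-1), (x k - x l)^2
          = (b k)^2 - (2*(b k))*(b l) + (b l)^2 := by
        intro l; simp only [hbdef]; ring
      rw [Finset.sum_congr rfl fun l _ => h1 l, Finset.sum_add_distrib,
        Finset.sum_sub_distrib, ← Finset.mul_sum, hbsum, Finset.sum_const,
        Finset.card_univ, Fintype.card_fin, nsmul_eq_mul, hcast]
      ring
    rw [Finset.sum_congr rfl fun k _ => inner k, Finset.sum_add_distrib,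
      ← Finset.mul_sum, Finset.sum_const, Finset.card_univ, Fintype.card_fin,
      nsmul_eq_mul, hcast]
    ring
  have hc' : 2*((n:ℝ)-1)*(∑ m, (b m)^2) ≤ (((n:ℝ)-1)^2 - 1)/6 := by
    rw [← hΦ]
    have : (((n-1:ℕ):ℝ)^2 - 1)/6 = (((n:ℝ)-1)^2 - 1)/6 := by rw [hcast]
    rw [← this]
    exact hc
  have hfinal : ∑ m, (b m)^2 ≤ (n:ℝ) * ((n:ℝ) - 2) / (12 * ((n:ℝ) - 1)) := by
    rw [le_div_iff₀ (by positivity : (0:ℝ) < 12*((n:ℝ)-1))]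
    nlinarith [hc']
  rw [hnorm, hsumz]
  exact Real.sqrt_le_sqrt hfinal
end

section
/- For n ≥ 2, every nonzero vector x of the permutohedral lattice A*_n satisfies ‖x‖² ≥ n/(n+1), with equality if and only if x = v^(i) or x = -v^(i) for some i ∈ {1, ..., n+1}, where v^(i) is the vector with i-th coordinate n/(n+1) and all other coordinates -1/(n+1). In other words, the vectors ±v^(1), ..., ±v^(n+1) are exactly the shortest non-zero vectors of A*_n. -/
/-- The permutohedral lattice `A*_n`: all points of the hyperplane
`∑ x_i = 0` in `ℝ^(n+1)` with integer coordinate differences. -/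
def Astar (n : ℕ) : Set (EuclideanSpace ℝ (Fin (n + 1))) :=
  {x | (∑ i, x i = 0) ∧ ∀ i j, ∃ k : ℤ, x i - x j = (k : ℝ)}

lemma config_of_two (n : ℕ) (a : Fin (n+1) → ℤ) (c d : ℤ)
    (hval : ∀ j, a j = c ∨ a j = d) (hsum : ∑ i, a i = 0)
    (hrel : (c - d = (n:ℤ)+1 ∧ d = -1) ∨ (c - d = -((n:ℤ)+1) ∧ d = 1)) :
    ∃ i, ∀ j, a j = if j = i then c else d := by
  classical
  set T := Finset.univ.filter (fun j => a j = c) with hT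
  have h5 : T.card ≤ n + 1 := le_trans (Finset.card_filter_le _ _) (by simp)
  have hcard : ∑ i, a i = T.card * c + ((n+1 : ℤ) - T.card) * d := by
    rw [← Finset.sum_filter_add_sum_filter_not Finset.univ (fun j => a j = c) a]
    have h1 : ∑ j ∈ T, a j = T.card * c := by
      rw [Finset.sum_congr rfl (fun j hj => (Finset.mem_filter.mp hj).2)]
      simp [mul_comm, hT]
    have h3 : ∀ j ∈ Finset.univ.filter (fun j => ¬ a j = c), a j = d := by
      intro j hj
      rcases hval j with h | h
      · exact absurd h (Finset.mem_filter.mp hj).2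
      · exact h
    have h4 : (Finset.univ.filter (fun j => ¬ a j = c)).card = (n+1) - T.card := by
      have h6 := Finset.card_filter_add_card_filter_not (s := (Finset.univ : Finset (Fin (n+1))))
        (p := fun j => a j = c)
      have h7 : (Finset.univ : Finset (Fin (n+1))).card = n + 1 := by simp
      have h8 : T.card = (Finset.univ.filter (fun j => a j = c)).card := rfl
      omega
    rw [h1, Finset.sum_congr rfl h3, Finset.sum_const, h4, nsmul_eq_mul,
      Nat.cast_sub h5]
    push_cast
    ring
  rw [hsum] at hcard
  have hT1 : T.card = 1 := by
    have h8 : (T.card : ℤ) * (c - d) = -((n:ℤ)+1) * d := by linarith [hcard]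
    have h9 : (T.card : ℤ) ≤ (n:ℤ) + 1 := by exact_mod_cast h5
    rcases hrel with ⟨h10, h11⟩ | ⟨h10, h11⟩ <;> rw [h10, h11] at h8 <;>
      [skip; skip] <;>
      · have : (T.card : ℤ) = 1 := by
          have hn1 : (0:ℤ) < (n:ℤ) + 1 := by positivity
          nlinarith
        exact_mod_cast this
  obtain ⟨i, hi⟩ := Finset.card_eq_one.mp hT1
  refine ⟨i, fun j => ?_⟩
  by_cases hj : j = i
  · subst hj
    have : j ∈ T := hi ▸ Finset.mem_singleton_self j
    simpa [hT] using (Finset.mem_filter.mp this).2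
  · simp only [hj, if_false]
    rcases hval j with h | h
    · exfalso; apply hj
      have hmem : j ∈ T := by simp [hT, h]
      rw [hi] at hmem
      exact Finset.mem_singleton.mp hmem
    · exact h

lemma sum_config (n : ℕ) (i : Fin (n+1)) (c d : ℤ) :
    ∑ j, (if j = i then c else d) = c + n * d := by
  have h1 : ∀ j : Fin (n+1), (if j = i then c else d) = (if j = i then c - d else 0) + d := by
    intro j; split <;> ring
  simp only [h1, Finset.sum_add_distrib, Finset.sum_ite_eq' Finset.univ i fun _ => c - d,
    Finset.mem_univ, if_true, Finset.sum_const, Finset.card_univ, Fintype.card_fin]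
  ring

lemma key (n : ℕ) (hn : 2 ≤ n) (a : Fin (n+1) → ℤ)
    (hsum : ∑ i, a i = 0)
    (hcong : ∀ i j, ((n:ℤ)+1) ∣ a i - a j)
    (h0 : ∃ i, a i ≠ 0) :
    (n : ℤ) * ((n:ℤ)+1) ≤ ∑ i, (a i)^2 ∧
    (∑ i, (a i)^2 = (n:ℤ)*((n:ℤ)+1) ↔
      (∃ i, ∀ j, a j = if j = i then (n:ℤ) else -1) ∨
      (∃ i, ∀ j, a j = if j = i then -(n:ℤ) else 1)) := by
  classical
  set N : ℤ := (n:ℤ) + 1 with hN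
  have hNpos : 0 < N := by positivity
  set r : ℤ := a 0 % N with hr
  have hr0 : 0 ≤ r := Int.emod_nonneg _ (ne_of_gt hNpos)
  have hrN : r < N := Int.emod_lt_of_pos _ hNpos
  have hmod : ∀ i, N ∣ a i - r := by
    intro i
    have h1 : a i - r = (a i - a 0) + (a 0 - a 0 % N) := by rw [hr]; ring
    rw [h1]
    exact dvd_add (hcong i 0) (Int.dvd_self_sub_of_emod_eq rfl)
  -- the configurations have sum of squares n(n+1)
  have hconfsum : ∀ (b : Fin (n+1) → ℤ),
      ((∃ i, ∀ j, b j = if j = i then (n:ℤ) else -1) ∨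
       (∃ i, ∀ j, b j = if j = i then -(n:ℤ) else 1)) →
      ∑ i, (b i)^2 = (n:ℤ)*((n:ℤ)+1) := by
    rintro b (⟨i, hb⟩ | ⟨i, hb⟩) <;>
    · have h1 : ∀ j, (b j)^2 = if j = i then (n:ℤ)^2 else 1 := by
        intro j; rw [hb j]; split <;> ring
      rw [Finset.sum_congr rfl (fun j _ => h1 j), sum_config]
      ring
  by_cases hr00 : r = 0
  · -- all coords divisible by N; sum of squares ≥ 2N² > n(n+1)
    have hdvd : ∀ i, N ∣ a i := by
      intro i; have := hmod i; rwa [hr00, sub_zero] at this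
    obtain ⟨i, hi⟩ := h0
    have hsq : ∀ j, a j ≠ 0 → N^2 ≤ (a j)^2 := by
      intro j hj
      obtain ⟨m, hm⟩ := hdvd j
      have hm0 : m ≠ 0 := by rintro rfl; simp at hm; exact hj hm
      have : 1 ≤ m^2 := by
        rcases lt_or_gt_of_ne hm0 with h | h <;> nlinarith
      calc N^2 = N^2 * 1 := by ring
        _ ≤ N^2 * m^2 := by nlinarith
        _ = (a j)^2 := by rw [hm]; ring
    have hjex : ∃ j, j ≠ i ∧ a j ≠ 0 := by
      by_contra h
      push_neg at h
      have : ∑ k, a k = a i := Finset.sum_eq_single i (fun j _ hj => h j hj) (by simp)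
      rw [hsum] at this; exact hi this.symm
    obtain ⟨j, hji, hj⟩ := hjex
    have hbig : 2 * N^2 ≤ ∑ k, (a k)^2 := by
      have hsub : ({i, j} : Finset (Fin (n+1))) ⊆ Finset.univ := by simp
      have h2 : ∑ k ∈ ({i, j} : Finset (Fin (n+1))), (a k)^2 = (a i)^2 + (a j)^2 := by
        rw [Finset.sum_pair (Ne.symm hji)]
      have h3 := Finset.sum_le_sum_of_subset_of_nonneg hsub
        (fun k _ _ => sq_nonneg (a k))
      rw [h2] at h3
      have := hsq i hi
      have := hsq j hj
      linarith
    have hgt : (n:ℤ) * N < ∑ k, (a k)^2 := by nlinarith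
    constructor
    · linarith
    · constructor
      · intro h; exact absurd h (ne_of_gt hgt)
      · intro h; exact absurd (hconfsum a h) (ne_of_gt hgt)
  · -- 1 ≤ r ≤ n
    have hr1 : 1 ≤ r := lt_of_le_of_ne hr0 (Ne.symm hr00)
    have hrn : r ≤ (n:ℤ) := by omega
    have hterm : ∀ i, 0 ≤ (a i - r) * (a i - r + N) := by
      intro i
      obtain ⟨m, hm⟩ := hmod i
      have h1 : (a i - r) * (a i - r + N) = N^2 * (m * (m+1)) := by rw [hm]; ring
      rw [h1]
      have : 0 ≤ m * (m+1) := by nlinarith [sq_nonneg (2*m+1)]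
      positivity
    have hexp : ∑ i, (a i - r) * (a i - r + N)
        = ∑ i, (a i)^2 + N * (r^2 - r*N) := by
      have h1 : ∀ i, (a i - r) * (a i - r + N)
          = (a i)^2 + (N - 2*r) * a i + (r^2 - r*N) := by intro i; ring
      rw [Finset.sum_congr rfl (fun i _ => h1 i), Finset.sum_add_distrib,
        Finset.sum_add_distrib, ← Finset.mul_sum, hsum, Finset.sum_const,
        Finset.card_univ, Fintype.card_fin]
      push_cast
      rw [hN]
      ring
    have htermsum : 0 ≤ ∑ i, (a i - r) * (a i - r + N) :=
      Finset.sum_nonneg (fun i _ => hterm i)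
    have hrbound : (n:ℤ) ≤ r * (N - r) := by nlinarith
    have hlow : (n:ℤ) * N ≤ ∑ i, (a i)^2 := by nlinarith
    refine ⟨hlow, ?_, fun h => hconfsum a h⟩
    intro heq
    -- each term zero, and r(N-r) = n
    have hsum0 : ∑ i, (a i - r) * (a i - r + N) = N * (n - r * (N - r)) := by
      rw [hexp, heq]; ring
    have hle0 : ∑ i, (a i - r) * (a i - r + N) ≤ 0 := by
      rw [hsum0]; nlinarith
    have hzero : ∑ i, (a i - r) * (a i - r + N) = 0 := le_antisymm hle0 htermsum
    have hreq : r * (N - r) = (n:ℤ) := by nlinarith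
    have heach : ∀ i, (a i - r) * (a i - r + N) = 0 := by
      intro i
      have := (Finset.sum_eq_zero_iff_of_nonneg (fun i _ => hterm i)).mp hzero
      exact this i (Finset.mem_univ i)
    have hval : ∀ i, a i = r ∨ a i = r - N := by
      intro i
      rcases mul_eq_zero.mp (heach i) with h | h
      · left; linarith
      · right; linarith
    have hr1n : r = 1 ∨ r = (n:ℤ) := by
      have : (r - 1) * ((n:ℤ) - r) = 0 := by nlinarith
      rcases mul_eq_zero.mp this with h | h
      · left; linarith
      · right; linarith
    rcases hr1n with h | h
    · right
      have : ∀ j, a j = -(n:ℤ) ∨ a j = 1 := by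
        intro j
        rcases hval j with h2 | h2
        · right; omega
        · left; omega
      exact config_of_two n a (-(n:ℤ)) 1 this hsum (Or.inr ⟨by ring, rfl⟩)
    · left
      have : ∀ j, a j = (n:ℤ) ∨ a j = -1 := by
        intro j
        rcases hval j with h2 | h2
        · left; omega
        · right; omega
      exact config_of_two n a (n:ℤ) (-1) this hsum (Or.inl ⟨by ring, rfl⟩)

/-- For `n ≥ 2`, every nonzero `x ∈ A*_n` satisfies `‖x‖² ≥ n/(n+1)`, with
equality iff `x = ±v⁽ⁱ⁾` for some `i`; i.e. the `±v⁽ⁱ⁾` are exactly the shortest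
non-zero vectors of `A*_n`. -/
theorem shortest_vectors (n : ℕ) (hn : 2 ≤ n)
    (x : EuclideanSpace ℝ (Fin (n + 1))) (hx : x ∈ Astar n) (hx0 : x ≠ 0) :
    (n : ℝ) / ((n : ℝ) + 1) ≤ ‖x‖ ^ 2 ∧
    (‖x‖ ^ 2 = (n : ℝ) / ((n : ℝ) + 1) ↔ ∃ i, x = v n i ∨ x = -v n i) := by
  classical
  obtain ⟨hxsum, hxdiff⟩ := hx
  choose k hk using fun i => hxdiff i 0
  set S : ℤ := ∑ i, k i with hS
  have hNpos : (0:ℝ) < (n:ℝ) + 1 := by positivity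
  have hx0' : ((n:ℝ)+1) * x 0 + (S : ℝ) = 0 := by
    have h1 : ∀ i, x i = x 0 + (k i : ℝ) := by
      intro i; have := hk i; linarith
    have h2 : ∑ i, x i = ((n:ℝ)+1) * x 0 + (S : ℝ) := by
      rw [Finset.sum_congr rfl (fun i _ => h1 i), Finset.sum_add_distrib,
        Finset.sum_const, Finset.card_univ, Fintype.card_fin]
      push_cast [hS]
      ring
    rw [hxsum] at h2; linarith
  set a : Fin (n+1) → ℤ := fun i => k i * ((n:ℤ)+1) - S with ha
  have hxa : ∀ i, x i = (a i : ℝ) / ((n:ℝ)+1) := by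
    intro i
    have h1 := hk i
    rw [ha]
    push_cast
    field_simp
    nlinarith [hx0', h1]
  have hasum : ∑ i, a i = 0 := by
    rw [ha]
    rw [Finset.sum_sub_distrib, ← Finset.sum_mul, Finset.sum_const,
      Finset.card_univ, Fintype.card_fin, ← hS]
    push_cast
    ring
  have hacong : ∀ i j, ((n:ℤ)+1) ∣ a i - a j := by
    intro i j
    exact ⟨k i - k j, by rw [ha]; ring⟩
  have ha0 : ∃ i, a i ≠ 0 := by
    by_contra h
    push_neg at h
    apply hx0
    ext i
    have := hxa i
    rw [h i] at this
    simpa using this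
  obtain ⟨hlow, hiff⟩ := key n hn a hasum hacong ha0
  have hnorm : ‖x‖^2 = (∑ i, ((a i : ℝ))^2) / ((n:ℝ)+1)^2 := by
    rw [EuclideanSpace.norm_eq]
    rw [Real.sq_sqrt (Finset.sum_nonneg fun i _ => sq_nonneg _)]
    rw [Finset.sum_congr rfl (fun i _ => by
      rw [Real.norm_eq_abs, sq_abs, hxa i, div_pow])]
    rw [← Finset.sum_div]
  have hsumR : ((∑ i, (a i)^2 : ℤ) : ℝ) = ∑ i, ((a i : ℝ))^2 := by push_cast; ring
  have hSa : ∑ i, ((a i : ℝ))^2 = ‖x‖^2 * ((n:ℝ)+1)^2 := by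
    rw [hnorm]; field_simp
  constructor
  · have h1 : ((n:ℤ) * ((n:ℤ)+1) : ℤ) ≤ (∑ i, (a i)^2 : ℤ) := hlow
    have h2 : ((n:ℝ)) * ((n:ℝ)+1) ≤ ∑ i, ((a i : ℝ))^2 := by
      rw [← hsumR]; exact_mod_cast h1
    rw [hnorm, div_le_div_iff₀ hNpos (by positivity)]
    nlinarith
  · have hstep : ‖x‖^2 = (n:ℝ)/((n:ℝ)+1) ↔ (∑ i, (a i)^2 : ℤ) = (n:ℤ)*((n:ℤ)+1) := by
      constructor
      · intro h
        have h2 : ∑ i, ((a i : ℝ))^2 = (n:ℝ) * ((n:ℝ)+1) := by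
          rw [hSa, h]; field_simp
        rw [← hsumR] at h2
        exact_mod_cast h2
      · intro h
        have h2 : ∑ i, ((a i : ℝ))^2 = (n:ℝ) * ((n:ℝ)+1) := by
          rw [← hsumR]; exact_mod_cast h
        rw [hnorm, h2]; field_simp
    rw [hstep, hiff]
    constructor
    · rintro (⟨i, hi⟩ | ⟨i, hi⟩)
      · refine ⟨i, Or.inl ?_⟩
        ext j
        rw [hxa j, hi j, v]
        simp only [WithLp.ofLp_toLp]
        split <;> push_cast <;> ring
      · refine ⟨i, Or.inr ?_⟩
        ext j
        have hneg : (-v n i) j = -(v n i j) := rfl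
        rw [hxa j, hi j, hneg, v]
        simp only [WithLp.ofLp_toLp]
        by_cases hj : j = i <;> simp only [hj, if_true, if_false] <;> push_cast <;> ring
    · rintro ⟨i, hi | hi⟩
      · left
        refine ⟨i, fun j => ?_⟩
        have h1 : x j = v n i j := by rw [hi]
        rw [hxa j, v] at h1
        by_cases hj : j = i
        · subst hj
          simp only [WithLp.ofLp_toLp, if_true] at h1 ⊢
          have h2 : (a j : ℝ) = (n : ℝ) := by field_simp at h1; linarith
          exact_mod_cast h2
        · simp only [WithLp.ofLp_toLp, hj, if_false] at h1 ⊢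
          have h2 : (a j : ℝ) = -1 := by field_simp at h1; linarith
          exact_mod_cast h2
      · right
        refine ⟨i, fun j => ?_⟩
        have h1 : x j = -(v n i j) := by rw [hi]; rfl
        rw [hxa j, v] at h1
        by_cases hj : j = i
        · subst hj
          simp only [WithLp.ofLp_toLp, if_true] at h1 ⊢
          have h2 : (a j : ℝ) = -(n : ℝ) := by field_simp at h1; linarith
          exact_mod_cast h2
        · simp only [WithLp.ofLp_toLp, hj, if_false] at h1 ⊢
          field_simp at h1
          exact_mod_cast h1
end
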